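/- A point x ≥ 0 (with integrality on a subset of coordinates) is feasible for the robust counterpart constraint ∑_j ā_{ij} x_j + DEV_i(x, S_M) ≤ b_i if and only if there exist w ∈ ℝ^K and z ∈ ℝ^J_{≥0} such that ∑_j ā_{ij} x_j + ∑_{k∈K} θ_k w_k + ∑_{j∈J} z_{ij} ≤ b_i and w_k + z_{ij} ≥ d^k_{ij} x_j for all j ∈ J, k ∈ K. -/

import Mathlib

open Finset
set_option linter.unusedSectionVars false

namespace Stmt7Aux

variable {K : Type} [Fintype K]

/-- weight of a walk along a list of vertices -/
noncomputable def wt (W : K → K → ℝ) : List K → ℝ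
  | [] => 0
  | [_] => 0
  | a :: b :: l => W a b + wt W (b :: l)

lemma wt_cons_cons (W : K → K → ℝ) (a b : K) (l : List K) :
    wt W (a :: b :: l) = W a b + wt W (b :: l) := rfl

lemma wt_append_cons (W : K → K → ℝ) (A : List K) (y : K) (Z : List K) :
    wt W (A ++ y :: Z) = wt W (A ++ [y]) + wt W (y :: Z) := by
  induction A with
  | nil => simp [wt]
  | cons a A ih =>
    cases A with
    | nil =>
      cases Z with
      | nil => simp [wt]
      | cons z Z => simp [wt]
    | cons b A' =>
      simp only [List.cons_append, wt_cons_cons] at *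
      rw [ih]; ring

lemma wt_swap (W : K → K → ℝ) (l : List K) :
    wt (fun a b => W b a) l = wt W l.reverse := by
  induction l with
  | nil => simp [wt]
  | cons a t ih =>
    cases t with
    | nil => simp [wt]
    | cons b t' =>
      rw [wt_cons_cons, ih]
      have h1 : (a :: b :: t').reverse = (b :: t').reverse ++ a :: ([] : List K) := by simp
      have h3 : (b :: t').reverse ++ [a] = t'.reverse ++ b :: [a] := by simp
      rw [h1, h3, wt_append_cons]
      have h2 : (b :: t').reverse = t'.reverse ++ [b] := by simp
      rw [← h2]
      simp [wt]
      ring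

lemma wt_le_mul (W : K → K → ℝ) (M : ℝ) (hM : 0 ≤ M) (hW : ∀ a b, W a b ≤ M) :
    ∀ l : List K, wt W l ≤ l.length * M := by
  intro l
  induction l with
  | nil => simp [wt]
  | cons a t ih =>
    cases t with
    | nil => simp [wt, hM]
    | cons b t' =>
      rw [wt_cons_cons]
      have := hW a b
      have hl : ((a :: b :: t').length : ℝ) = (b :: t').length + 1 := by
        simp [List.length_cons]
      rw [hl]
      nlinarith [ih]

lemma exists_cycle_decomp {l : List K} (h : ¬ l.Nodup) :
    ∃ (A : List K) (a : K) (B C : List K), l = A ++ a :: B ++ a :: C ∧ (a :: B).Nodup := by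
  induction l with
  | nil => simp at h
  | cons x t ih =>
    by_cases ht : t.Nodup
    · have hx : x ∈ t := by
        by_contra hxt
        exact h (List.nodup_cons.2 ⟨hxt, ht⟩)
      obtain ⟨B, C, rfl⟩ := List.append_of_mem hx
      refine ⟨[], x, B, C, by simp, ?_⟩
      rw [List.nodup_append] at ht
      exact List.nodup_cons.2 ⟨fun hxB => (ht.2.2 x hxB x List.mem_cons_self rfl), ht.1⟩
    · obtain ⟨A, a, B, C, hdec, hn⟩ := ih ht
      exact ⟨x :: A, a, B, C, by rw [hdec]; simp, hn⟩

lemma wt_le_of_cycles (W : K → K → ℝ) (M : ℝ) (hM : 0 ≤ M) (hW : ∀ a b, W a b ≤ M)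
    (P : K → Prop)
    (hcyc : ∀ (a : K) (B : List K), (a :: B).Nodup → (∀ x ∈ a :: B, P x) →
      wt W (a :: (B ++ [a])) ≤ 0) :
    ∀ (N : ℕ) (l : List K), l.length ≤ N → (∀ x ∈ l, P x) →
      wt W l ≤ (Fintype.card K) * M := by
  intro N
  induction N with
  | zero =>
    intro l hl _
    have : l = [] := List.length_eq_zero_iff.1 (Nat.le_zero.1 hl)
    subst this
    simp only [wt]
    positivity
  | succ N ih =>
    intro l hl hP
    by_cases hnd : l.Nodup
    · calc wt W l ≤ l.length * M := wt_le_mul W M hM hW l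
        _ ≤ (Fintype.card K) * M := by
          have := hnd.length_le_card
          exact mul_le_mul_of_nonneg_right (by exact_mod_cast this) hM
    · obtain ⟨A, a, B, C, hdec, hn⟩ := exists_cycle_decomp hnd
      subst hdec
      have e1 : wt W (A ++ a :: B ++ a :: C)
          = wt W (A ++ [a]) + wt W (a :: (B ++ a :: C)) := by
        have : A ++ a :: B ++ a :: C = A ++ a :: (B ++ a :: C) := by simp
        rw [this, wt_append_cons]
      have e2 : wt W (a :: (B ++ a :: C))
          = wt W (a :: (B ++ [a])) + wt W (a :: C) := by
        have : a :: (B ++ a :: C) = (a :: B) ++ a :: C := by simp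
        rw [this, wt_append_cons]
        simp
      have e3 : wt W (A ++ a :: C) = wt W (A ++ [a]) + wt W (a :: C) :=
        wt_append_cons W A a C
      have hc : wt W (a :: (B ++ [a])) ≤ 0 := by
        apply hcyc a B hn
        intro x hx
        apply hP
        rcases List.mem_cons.1 hx with rfl | hxB
        · simp
        · simp [hxB]
      have hrec : wt W (A ++ a :: C) ≤ (Fintype.card K) * M := by
        apply ih
        · have : (A ++ a :: B ++ a :: C).length ≤ N + 1 := hl
          simp only [List.length_append, List.length_cons] at this ⊢
          omega
        · intro x hx
          apply hP
          simp only [List.mem_append, List.mem_cons] at hx ⊢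
          tauto
      linarith

lemma wt_eq_sum_range (W : K → K → ℝ) (k0 : K) :
    ∀ l : List K, wt W l = ∑ i ∈ Finset.range (l.length - 1),
      W (l.getD i k0) (l.getD (i + 1) k0) := by
  intro l
  induction l with
  | nil => simp [wt]
  | cons a t ih =>
    cases t with
    | nil => simp [wt]
    | cons b t' =>
      rw [wt_cons_cons, ih]
      have hlen : (a :: b :: t').length - 1 = ((b :: t').length - 1) + 1 := by
        simp
      rw [hlen, Finset.sum_range_succ']
      simp [List.getD_cons_succ, List.getD_cons_zero]
      ring

lemma wt_cycle_eq (W : K → K → ℝ) (r : ℕ) (e : Fin (r + 1) → K) :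
    wt W (List.ofFn e ++ [e 0]) = ∑ i : Fin (r + 1), W (e i) (e (i + 1)) := by
  set l := List.ofFn e with hl
  have hL : l.length = r + 1 := by simp [hl]
  have hgetD : ∀ i : ℕ, (hi : i < r + 1) → l.getD i (e 0) = e ⟨i, hi⟩ := by
    intro i hi
    rw [List.getD_eq_getElem _ _ (by omega)]
    exact List.getElem_ofFn ..
  rw [wt_eq_sum_range W (e 0)]
  have hlen : (l ++ [e 0]).length - 1 = r + 1 := by simp [hL]
  rw [hlen]
  calc ∑ i ∈ Finset.range (r+1), W ((l ++ [e 0]).getD i (e 0)) ((l ++ [e 0]).getD (i+1) (e 0))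
      = ∑ i ∈ Finset.range (r+1),
          W (l.getD (i % (r+1)) (e 0)) (l.getD ((i+1) % (r+1)) (e 0)) := by
        apply Finset.sum_congr rfl
        intro i hi
        rw [Finset.mem_range] at hi
        have h1 : (l ++ [e 0]).getD i (e 0) = l.getD (i % (r+1)) (e 0) := by
          rw [List.getD_append _ _ _ _ (by omega), Nat.mod_eq_of_lt hi]
        rw [h1]
        congr 1
        by_cases h2 : i + 1 < r + 1
        · rw [List.getD_append _ _ _ _ (by omega), Nat.mod_eq_of_lt h2]
        · have h3 : i + 1 = r + 1 := by omega
          rw [h3, List.getD_append_right _ _ _ _ (by omega), hL, Nat.mod_self,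
            hgetD 0 (by omega), Nat.sub_self]
          simp
    _ = ∑ i : Fin (r+1), W (l.getD (↑i % (r+1)) (e 0)) (l.getD ((↑i+1) % (r+1)) (e 0)) :=
        (Fin.sum_univ_eq_sum_range
          (fun n => W (l.getD (n % (r+1)) (e 0)) (l.getD ((n+1) % (r+1)) (e 0))) (r+1)).symm
    _ = ∑ i : Fin (r+1), W (e i) (e (i + 1)) := by
        apply Finset.sum_congr rfl
        intro i _
        have hv1 : (↑i % (r+1)) = (i : ℕ) := Nat.mod_eq_of_lt i.isLt
        have hv2 : ((i : ℕ) + 1) % (r+1) < r + 1 := Nat.mod_lt _ (by omega)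
        rw [hv1, hgetD _ i.isLt, hgetD _ hv2]
        have he1 : (⟨(i : ℕ), i.isLt⟩ : Fin (r+1)) = i := Fin.ext rfl
        have he2 : (⟨((i : ℕ) + 1) % (r+1), hv2⟩ : Fin (r+1)) = i + 1 := by
          apply Fin.ext
          show ((i : ℕ) + 1) % (r+1) = ((i + 1 : Fin (r+1)) : ℕ)
          rw [Fin.add_def, Fin.val_one', Nat.add_mod ((i : ℕ)) 1 (r+1),
            Nat.mod_eq_of_lt i.isLt]
        rw [he1, he2]

lemma exchange {ι : Type} [Fintype ι] [DecidableEq ι] [DecidableEq K]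
    (c : ι → K → ℝ) (f : ι → K)
    (hmax : ∀ g : ι → K,
      (∀ k, (univ.filter (fun j => g j = k)).card = (univ.filter (fun j => f j = k)).card) →
      ∑ j, c j (g j) ≤ ∑ j, c j (f j))
    (r : ℕ) (e : Fin (r + 1) → K) (he : Function.Injective e)
    (hne : ∀ i, (univ.filter (fun j => f j = e i)).Nonempty) :
    ∑ i, (univ.filter (fun j => f j = e i)).sup' (hne i)
        (fun j => c j (e (i + 1)) - c j (e i)) ≤ 0 := by
  classical
  have h := fun i => Finset.exists_mem_eq_sup' (hne i) (fun j => c j (e (i+1)) - c j (e i))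
  choose j hjmem hjval using h
  have hjf : ∀ i, f (j i) = e i := fun i => (Finset.mem_filter.1 (hjmem i)).2
  have hjinj : Function.Injective j := by
    intro i i' hii
    apply he
    rw [← hjf i, ← hjf i', hii]
  set jemb : Fin (r+1) ↪ ι := ⟨j, hjinj⟩ with hjemb
  set π : Equiv.Perm ι := (finRotate (r+1)).viaFintypeEmbedding jemb with hπ
  have hπ1 : ∀ i, π (j i) = j (i + 1) := by
    intro i
    have : π (jemb i) = jemb (finRotate (r+1) i) :=
      Equiv.Perm.viaFintypeEmbedding_apply_image (finRotate (r+1)) jemb i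
    simpa [hjemb] using this
  have hπ2 : ∀ x, x ∉ Set.range j → π x = x := by
    intro x hxr
    exact Equiv.Perm.viaFintypeEmbedding_apply_notMem_range _ _ hxr
  set g : ι → K := fun x => f (π x) with hg
  have hgcard : ∀ k, (univ.filter (fun j => g j = k)).card
      = (univ.filter (fun j => f j = k)).card := by
    intro k
    have hmap : (univ.filter (fun x => f x = k)).map π.symm.toEmbedding
        = univ.filter (fun x => g x = k) := by
      ext x
      simp only [Finset.mem_map, Finset.mem_filter, Finset.mem_univ, true_and,
        Equiv.coe_toEmbedding, hg]
      constructor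
      · rintro ⟨y, hy, rfl⟩
        simpa [Equiv.apply_symm_apply] using hy
      · intro hx
        exact ⟨π x, hx, Equiv.symm_apply_apply _ _⟩
    rw [← hmap, Finset.card_map]
  have hsum := hmax g hgcard
  -- rewrite the sum difference as a sum over the cycle
  have hdiff : ∑ i, (c (j i) (e (i+1)) - c (j i) (e i))
      = ∑ x, c x (g x) - ∑ x, c x (f x) := by
    rw [← Finset.sum_sub_distrib]
    have hzero : ∀ x ∈ (univ : Finset ι), x ∉ univ.map jemb →
        c x (g x) - c x (f x) = 0 := by
      intro x _ hx
      have hxr : x ∉ Set.range j := by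
        intro ⟨i, hi⟩
        exact hx (Finset.mem_map.2 ⟨i, Finset.mem_univ _, hi⟩)
      rw [hg]
      simp [hπ2 x hxr]
    rw [← Finset.sum_subset (Finset.subset_univ (univ.map jemb)) hzero,
      Finset.sum_map]
    apply Finset.sum_congr rfl
    intro i _
    have h1 : g (jemb i) = e (i + 1) := by
      show f (π (j i)) = e (i+1)
      rw [hπ1 i, hjf]
    have h2 : f (jemb i) = e i := hjf i
    rw [h1, h2]
    rfl
  calc ∑ i, (univ.filter (fun j => f j = e i)).sup' (hne i)
        (fun j => c j (e (i + 1)) - c j (e i))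
      = ∑ i, (c (j i) (e (i+1)) - c (j i) (e i)) := by
        apply Finset.sum_congr rfl
        intro i _
        exact hjval i
    _ = ∑ x, c x (g x) - ∑ x, c x (f x) := hdiff
    _ ≤ 0 := by linarith

lemma exists_fiber_fun {ι : Type} [Fintype ι] [DecidableEq K] (θ : K → ℕ)
    (hθ : ∑ k, θ k = Fintype.card ι) :
    ∃ f : ι → K, ∀ k, (univ.filter (fun j => f j = k)).card = θ k := by
  classical
  have hcard : Fintype.card ι = Fintype.card (Σ k, Fin (θ k)) := by
    simp [Fintype.card_sigma, ← hθ]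
  let E := Fintype.equivOfCardEq hcard
  refine ⟨fun j => (E j).1, fun k => ?_⟩
  have e2 : {j : ι // (E j).1 = k} ≃ {s : Σ k', Fin (θ k') // s.1 = k} :=
    E.subtypeEquiv (fun j => Iff.rfl)
  have e3 : {s : Σ k', Fin (θ k') // s.1 = k} ≃ Fin (θ k) :=
    { toFun := fun s => Fin.cast (congrArg θ s.2) s.1.2
      invFun := fun i => ⟨⟨k, i⟩, rfl⟩
      left_inv := by rintro ⟨⟨k', i⟩, rfl⟩; rfl
      right_inv := fun i => rfl }
  rw [← Fintype.card_subtype, ← Fintype.card_fin (θ k)]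
  exact Fintype.card_congr (e2.trans e3)

lemma dual_core {ι : Type} [Fintype ι] [Nonempty ι] [DecidableEq ι] [DecidableEq K] (c : ι → K → ℝ) (θ : K → ℕ)
    (hθ : ∑ k, θ k = Fintype.card ι) :
    ∃ (w : K → ℝ) (z : ι → ℝ), (∀ j, 0 ≤ z j) ∧ (∀ j k, c j k ≤ w k + z j) ∧
      ∃ f : ι → K, (∀ k, (univ.filter (fun j => f j = k)).card = θ k) ∧
        ∑ k, (θ k : ℝ) * w k + ∑ j, z j = ∑ j, c j (f j) := by
  classical
  have hι : 0 < Fintype.card ι := Fintype.card_pos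
  have hKne : ∃ k, θ k ≠ 0 := by
    by_contra hkk
    push_neg at hkk
    rw [Finset.sum_eq_zero (fun k _ => hkk k)] at hθ
    omega
  have hK : Nonempty K := ⟨hKne.choose⟩
  obtain ⟨f0, hf0⟩ := exists_fiber_fun θ hθ
  set Fs : Finset (ι → K) :=
    univ.filter (fun f => ∀ k, (univ.filter (fun j => f j = k)).card = θ k) with hFsdef
  have hFs : Fs.Nonempty := ⟨f0, by simp [hFsdef, hf0]⟩
  obtain ⟨f, hfF, hfmax⟩ := Finset.exists_max_image Fs (fun f => ∑ j, c j (f j)) hFs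
  have hfib : ∀ k, (univ.filter (fun j => f j = k)).card = θ k := by
    have := hfF
    simp only [hFsdef, Finset.mem_filter, Finset.mem_univ, true_and] at this
    exact this
  have hmax : ∀ g : ι → K,
      (∀ k, (univ.filter (fun j => g j = k)).card = (univ.filter (fun j => f j = k)).card) →
      ∑ j, c j (g j) ≤ ∑ j, c j (f j) := by
    intro g hgc
    apply hfmax g
    simp only [hFsdef, Finset.mem_filter, Finset.mem_univ, true_and]
    intro k
    rw [hgc k, hfib k]
  set fib : K → Finset ι := fun k => univ.filter (fun j => f j = k) with hfibdef
  have hfne : ∀ k, θ k ≠ 0 → (fib k).Nonempty := by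
    intro k hk
    apply Finset.card_pos.1
    rw [hfibdef]
    simp only []
    rw [hfib k]
    omega
  set Δ : K → K → ℝ := fun k k' =>
    if h : (fib k).Nonempty then (fib k).sup' h (fun j => c j k' - c j k) else 0 with hΔdef
  have hιne : (univ : Finset ι).Nonempty := Finset.univ_nonempty
  have hpne : (univ : Finset (ι × K × K)).Nonempty := Finset.univ_nonempty
  set M0 : ℝ := (univ : Finset (ι × K × K)).sup' hpne (fun p => c p.1 p.2.2 - c p.1 p.2.1)
    with hM0def
  set M := max 0 M0 with hMdef
  have hM0 : (0:ℝ) ≤ M := le_max_left _ _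
  have hΔM : ∀ a b, Δ a b ≤ M := by
    intro a b
    simp only [hΔdef]
    by_cases h : (fib a).Nonempty
    · rw [dif_pos h]
      apply Finset.sup'_le
      intro j hj
      refine le_trans ?_ (le_max_right 0 M0)
      exact Finset.le_sup' (fun p : ι × K × K => c p.1 p.2.2 - c p.1 p.2.1)
        (Finset.mem_univ (j, a, b))
    · rw [dif_neg h]; exact hM0
  set V : K → K → ℝ := fun a b => Δ b a with hVdef
  have hVM : ∀ a b, V a b ≤ M := fun a b => hΔM b a
  have hfj : ∀ j, θ (f j) ≠ 0 := by
    intro j h0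
    have h1 : j ∈ fib (f j) := by simp [hfibdef]
    have h2 := hfib (f j)
    rw [h0, Finset.card_eq_zero] at h2
    rw [hfibdef] at h1
    simp only [] at h1 h2
    rw [h2] at h1
    exact absurd h1 (Finset.notMem_empty j)
  have hcycΔ : ∀ (a : K) (B : List K), (a :: B).Nodup → (∀ x ∈ a :: B, θ x ≠ 0) →
      wt Δ (a :: (B ++ [a])) ≤ 0 := by
    intro a B hnd hmem
    set e : Fin (B.length + 1) → K := (a :: B).get with hedef
    have hofn : List.ofFn e = a :: B := List.ofFn_get _
    have he0 : e 0 = a := rfl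
    have heinj : Function.Injective e := List.nodup_iff_injective_get.1 hnd
    have hnei : ∀ i, (univ.filter (fun j => f j = e i)).Nonempty := by
      intro i
      have : e i ∈ a :: B := by rw [hedef]; apply List.get_mem
      exact hfne _ (hmem _ this)
    have hbr : wt Δ (a :: (B ++ [a])) = ∑ i, Δ (e i) (e (i+1)) := by
      have h1 : a :: (B ++ [a]) = List.ofFn e ++ [e 0] := by rw [hofn, he0]; simp
      rw [h1, wt_cycle_eq]
    rw [hbr]
    calc ∑ i, Δ (e i) (e (i+1))
        = ∑ i, (univ.filter (fun j => f j = e i)).sup' (hnei i)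
            (fun j => c j (e (i+1)) - c j (e i)) := by
          apply Finset.sum_congr rfl
          intro i _
          simp only [hΔdef]
          rw [dif_pos (hnei i)]
      _ ≤ 0 := exchange c f hmax _ e heinj hnei
  have hcycV : ∀ (a : K) (B : List K), (a :: B).Nodup → (∀ x ∈ a :: B, θ x ≠ 0) →
      wt V (a :: (B ++ [a])) ≤ 0 := by
    intro a B hnd hmem
    have h1 : wt V (a :: (B ++ [a])) = wt Δ ((a :: (B ++ [a])).reverse) := wt_swap Δ _
    have h2 : (a :: (B ++ [a])).reverse = a :: (B.reverse ++ [a]) := by simp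
    rw [h1, h2]
    apply hcycΔ a B.reverse
    · have : (a :: B.reverse).Nodup ↔ (a :: B).Nodup := by simp [List.nodup_cons]
      exact this.2 hnd
    · intro x hx
      apply hmem
      rcases List.mem_cons.1 hx with rfl | h
      · exact List.mem_cons_self
      · exact List.mem_cons_of_mem _ (List.mem_reverse.1 h)
  have hbound : ∀ l : List K, (∀ x ∈ l, θ x ≠ 0) → wt V l ≤ (Fintype.card K) * M :=
    fun l hl => wt_le_of_cycles V M hM0 hVM (fun k => θ k ≠ 0) hcycV l.length l le_rfl hl
  set S : K → Set ℝ := fun k => {v | ∃ l : List K, (∀ x ∈ l, θ x ≠ 0) ∧ v = wt V (k :: l)}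
    with hSdef
  set P : K → ℝ := fun k => sSup (S k) with hPdef
  have hSne : ∀ k, (S k).Nonempty := fun k => ⟨wt V [k], [], by simp, rfl⟩
  have hSbdd : ∀ k, θ k ≠ 0 → BddAbove (S k) := by
    intro k hk
    refine ⟨(Fintype.card K) * M, ?_⟩
    rintro v ⟨l, hl, rfl⟩
    apply hbound (k :: l)
    intro x hx
    rcases List.mem_cons.1 hx with rfl | h
    · exact hk
    · exact hl x h
  have hP0 : ∀ k, θ k ≠ 0 → 0 ≤ P k := by
    intro k hk
    have hm : wt V [k] ∈ S k := ⟨[], by simp, rfl⟩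
    have := le_csSup (hSbdd k hk) hm
    simpa [wt] using this
  have htri : ∀ k k', θ k ≠ 0 → θ k' ≠ 0 → P k + Δ k k' ≤ P k' := by
    intro k k' hk hk'
    have h1 : ∀ v ∈ S k, v ≤ P k' - Δ k k' := by
      rintro v ⟨l, hl, rfl⟩
      have hmem : wt V (k' :: k :: l) ∈ S k' := by
        refine ⟨k :: l, ?_, rfl⟩
        intro x hx
        rcases List.mem_cons.1 hx with rfl | h
        · exact hk
        · exact hl x h
      have h2 := le_csSup (hSbdd k' hk') hmem
      rw [wt_cons_cons] at h2
      have h3 : V k' k = Δ k k' := rfl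
      rw [h3] at h2
      linarith
    have h4 : P k ≤ P k' - Δ k k' := csSup_le (hSne k) h1
    linarith
  set Kp : Finset K := univ.filter (fun k => θ k ≠ 0) with hKpdef
  have hKpne : Kp.Nonempty := ⟨hKne.choose, by simp [hKpdef, hKne.choose_spec]⟩
  set m : K → ℝ := fun k =>
    if h : (fib k).Nonempty then (fib k).inf' h (fun j => c j k) else 0 with hmdef
  set L : ℝ := Kp.inf' hKpne (fun k => m k - P k) with hLdef
  set w : K → ℝ := fun k => if θ k ≠ 0 then P k + L
    else (univ : Finset ι).sup' hιne (fun j => c j k) with hwdef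
  have hwval : ∀ k, θ k ≠ 0 → w k = P k + L := by
    intro k hk; rw [hwdef]; simp only []; rw [if_pos hk]
  have hwm : ∀ k, θ k ≠ 0 → w k ≤ m k := by
    intro k hk
    rw [hwval k hk]
    have : L ≤ m k - P k := Finset.inf'_le _ (by simp [hKpdef, hk])
    linarith
  set z : ι → ℝ := fun j => c j (f j) - w (f j) with hzdef
  have hjfib : ∀ j, j ∈ fib (f j) := by intro j; simp [hfibdef]
  have hmle : ∀ j, m (f j) ≤ c j (f j) := by
    intro j
    rw [hmdef]
    simp only []
    rw [dif_pos (hfne _ (hfj j))]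
    exact Finset.inf'_le _ (hjfib j)
  have hz : ∀ j, 0 ≤ z j := by
    intro j
    have h1 := hwm (f j) (hfj j)
    have h2 := hmle j
    rw [hzdef]
    simp only []
    linarith
  have hcon : ∀ j k, c j k ≤ w k + z j := by
    intro j k
    by_cases hk : θ k ≠ 0
    · have h1 : c j k - c j (f j) ≤ Δ (f j) k := by
        simp only [hΔdef]
        rw [dif_pos (hfne _ (hfj j))]
        exact Finset.le_sup' (fun j' => c j' k - c j' (f j)) (hjfib j)
      have h2 := htri (f j) k (hfj j) hk
      rw [hwval k hk]
      rw [hzdef]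
      simp only []
      rw [hwval (f j) (hfj j)]
      linarith
    · push_neg at hk
      have h1 : c j k ≤ w k := by
        rw [hwdef]
        simp only []
        rw [if_neg (by simp [hk])]
        exact Finset.le_sup' (fun j' => c j' k) (Finset.mem_univ j)
      linarith [hz j]
  refine ⟨w, z, hz, hcon, f, hfib, ?_⟩
  have hsplit : ∑ j, w (f j) = ∑ k, (θ k : ℝ) * w k := by
    rw [← Finset.sum_fiberwise' univ f w]
    apply Finset.sum_congr rfl
    intro k _
    rw [Finset.sum_const]
    rw [hfib k]
    simp [nsmul_eq_mul]
  have hzsum : ∑ j, z j = ∑ j, c j (f j) - ∑ j, w (f j) := by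
    rw [hzdef]
    simp only []
    rw [Finset.sum_sub_distrib]
  rw [hzsum, ← hsplit]
  ring

end Stmt7Aux

theorem stmt7 (n : ℕ) (K : Type) [Fintype K]
    (θ : K → ℕ) (hθ : ∑ k, θ k = n)
    (abar : Fin n → ℝ) (b : ℝ)
    (d : Fin n → K → ℝ) (x : Fin n → ℝ) (hx : ∀ j, 0 ≤ x j)
    (JZ : Finset (Fin n)) (hint : ∀ j ∈ JZ, ∃ z : ℤ, x j = z) :
    (∀ y : Fin n → K → ℝ, (∀ j k, y j k = 0 ∨ y j k = 1) →
        (∀ k, ∑ j, y j k = (θ k : ℝ)) → (∀ j, ∑ k, y j k ≤ 1) →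
        ∑ j, abar j * x j + ∑ j, ∑ k, d j k * x j * y j k ≤ b) ↔
    (∃ (w : K → ℝ) (z : Fin n → ℝ), (∀ j, 0 ≤ z j) ∧
      (∀ j k, d j k * x j ≤ w k + z j) ∧
      ∑ j, abar j * x j + ∑ k, (θ k : ℝ) * w k + ∑ j, z j ≤ b) := by
  classical
  constructor
  · intro H
    by_cases hn : n = 0
    · subst hn
      have hθ0 : ∀ k, θ k = 0 := by
        intro k
        have := Finset.sum_eq_zero_iff.1 hθ
        exact this k (Finset.mem_univ k)
      refine ⟨0, 0, fun j => le_refl _, fun j k => j.elim0, ?_⟩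
      have hb := H (fun _ _ => 0) (fun j k => Or.inl rfl)
        (fun k => by simp [hθ0 k]) (fun j => j.elim0)
      simpa using hb
    · have hne : Nonempty (Fin n) := Fin.pos_iff_nonempty.1 (Nat.pos_of_ne_zero hn)
      obtain ⟨w, z, hz, hcon, f, hfib, hobj⟩ :=
        Stmt7Aux.dual_core (fun j k => d j k * x j) θ (by rw [Fintype.card_fin]; exact hθ)
      refine ⟨w, z, hz, hcon, ?_⟩
      set y : Fin n → K → ℝ := fun j k => if f j = k then 1 else 0 with hydef
      have h01 : ∀ j k, y j k = 0 ∨ y j k = 1 := by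
        intro j k
        by_cases h : f j = k <;> simp [hydef, h]
      have hcol : ∀ k, ∑ j, y j k = (θ k : ℝ) := by
        intro k
        simp only [hydef]
        rw [Finset.sum_boole, ← hfib k]
      have hrow : ∀ j, ∑ k, y j k ≤ 1 := by
        intro j
        simp only [hydef]
        rw [Finset.sum_ite_eq]
        simp
      have hH := H y h01 hcol hrow
      have hyy : ∑ j, ∑ k, d j k * x j * y j k = ∑ j, d j (f j) * x j := by
        apply Finset.sum_congr rfl
        intro j _
        simp only [hydef, mul_ite, mul_one, mul_zero]
        rw [Finset.sum_ite_eq]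
        simp
      rw [hyy] at hH
      linarith [hobj]
  · rintro ⟨w, z, hz, hcon, hsum⟩ y h01 hcol hrow
    have step1 : ∀ j k, d j k * x j * y j k ≤ (w k + z j) * y j k := by
      intro j k
      rcases h01 j k with h | h
      · simp [h]
      · rw [h, mul_one, mul_one]
        exact hcon j k
    have key : ∑ j, ∑ k, d j k * x j * y j k ≤ ∑ k, (θ k : ℝ) * w k + ∑ j, z j := by
      calc ∑ j, ∑ k, d j k * x j * y j k
          ≤ ∑ j, ∑ k, (w k + z j) * y j k := by
            apply Finset.sum_le_sum
            intro j _
            exact Finset.sum_le_sum (fun k _ => step1 j k)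
        _ = (∑ k, w k * ∑ j, y j k) + ∑ j, z j * ∑ k, y j k := by
            simp_rw [add_mul, Finset.sum_add_distrib, Finset.mul_sum]
            congr 1
            rw [Finset.sum_comm]
        _ ≤ ∑ k, (θ k : ℝ) * w k + ∑ j, z j := by
            apply add_le_add
            · apply le_of_eq
              apply Finset.sum_congr rfl
              intro k _
              rw [hcol k]
              ring
            · apply Finset.sum_le_sum
              intro j _
              calc z j * (∑ k, y j k) ≤ z j * 1 :=
                    mul_le_mul_of_nonneg_left (hrow j) (hz j)
                _ = z j := mul_one _
    linarith
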